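/- For any structure 𝔄 in a relational language L, there exists a structure 𝔅 in a countable language, with universe the disjoint union of the universe of 𝔄 and L equipped with a rigid structure, such that Aut(𝔅) ≅ Aut(𝔄). -/

import Mathlib

open FirstOrder

namespace Stmt6Aux

open FirstOrder.Language FirstOrder.Language.Structure Sum

/-- The big language: `L'` plus a unary predicate `P` (the `PLift` summand at arity 1)
and, for each `k`, a `(k+1)`-ary relation `Rₖ` (the subtype summand). -/
def Lbig (L' : Language) : Language where
  Functions := L'.Functions
  Relations n := L'.Relations n ⊕ (PLift (n = 1) ⊕ {k : ℕ // n = k + 1})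

instance (L' : Language) [Countable L'.Symbols] : Countable (Lbig L').Symbols := by
  haveI : Countable ((l : ℕ) × (Lbig L').Functions l) :=
    inferInstanceAs (Countable ((l : ℕ) × L'.Functions l))
  haveI : Countable ((l : ℕ) × L'.Relations l) :=
    (Sum.inr_injective (α := (l : ℕ) × L'.Functions l)).countable
  haveI : ∀ l : ℕ, Countable (L'.Relations l) := fun l => sigma_mk_injective.countable
  haveI : ∀ l : ℕ, Countable ((Lbig L').Relations l) := fun l =>
    inferInstanceAs (Countable (L'.Relations l ⊕ (PLift (l = 1) ⊕ {k : ℕ // l = k + 1})))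
  exact inferInstanceAs (Countable (((l : ℕ) × (Lbig L').Functions l) ⊕
    ((l : ℕ) × (Lbig L').Relations l)))

variable {M α : Type*}

attribute [local instance] Classical.propDecidable

/-- Extend a function on `α`-tuples to `(M ⊕ α)`-tuples. -/
noncomputable def extendFun {n : ℕ} (F : (Fin n → α) → α) (x : Fin n → M ⊕ α) : M ⊕ α :=
  if h : ∀ i, ∃ s, x i = Sum.inr s then Sum.inr (F fun i => (h i).choose)
  else x ⟨0, Nat.pos_of_ne_zero (by rintro rfl; exact h fun i => i.elim0)⟩

lemma extendFun_inr {n : ℕ} (F : (Fin n → α) → α) (y : Fin n → α) :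
    extendFun (M := M) F (Sum.inr ∘ y) = Sum.inr (F y) := by
  have h : ∀ i, ∃ s, (Sum.inr ∘ y) i = (Sum.inr (α := M) s) := fun i => ⟨y i, rfl⟩
  rw [extendFun, dif_pos h]
  exact congrArg (Sum.inr ∘ F) (funext fun i => (Sum.inr_injective (h i).choose_spec).symm)

lemma extendFun_map {n : ℕ} (σ : M → M) (F : (Fin n → α) → α) (x : Fin n → M ⊕ α) :
    extendFun F (Sum.map σ id ∘ x) = Sum.map σ id (extendFun F x) := by
  have key : ∀ i, (∃ s, (Sum.map σ id ∘ x) i = Sum.inr s) ↔ ∃ s, x i = Sum.inr s := by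
    intro i; cases h : x i <;> simp [h]
  by_cases h : ∀ i, ∃ s, x i = Sum.inr s
  · have h' : ∀ i, ∃ s, (Sum.map σ id ∘ x) i = Sum.inr s := fun i => (key i).mpr (h i)
    rw [extendFun, dif_pos h', extendFun, dif_pos h]
    simp only [Sum.map_inr, id]
    refine congrArg (Sum.inr ∘ F) (funext fun i => Sum.inr_injective (α := M) ?_)
    exact ((h' i).choose_spec.symm).trans
      ((congrArg (Sum.map σ id) (h i).choose_spec).trans rfl)
  · have h' : ¬ ∀ i, ∃ s, (Sum.map σ id ∘ x) i = Sum.inr s := fun hh => h fun i => (key i).mp (hh i)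
    rw [extendFun, dif_neg h', extendFun, dif_neg h]
    rfl

variable {L : Language} [L.Structure M] (L' : Language) [L'.Structure (Σ n, L.Relations n)]

/-- The big structure on `M ⊕ Σ n, L.Relations n`. -/
noncomputable def bigStr : (Lbig L').Structure (M ⊕ Σ n, L.Relations n) where
  funMap {n} f x := extendFun (funMap (L := L') f) x
  RelMap {n} r x :=
    match r with
    | .inl r => ∃ y, x = Sum.inr ∘ y ∧ RelMap r y
    | .inr (.inl _) => ∀ i, (x i).isRight
    | .inr (.inr ⟨k, hk⟩) => ∃ (m : Fin k → M) (R : L.Relations k),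
        x = Fin.snoc (Sum.inl ∘ m) (Sum.inr ⟨k, R⟩) ∘ Fin.cast hk ∧ RelMap R m

end Stmt6Aux

namespace Stmt6Aux2
open FirstOrder.Language FirstOrder.Language.Structure Sum Stmt6Aux

variable {M : Type*} {L : Language} [L.Structure M] {L' : Language}
  [L'.Structure (Σ n, L.Relations n)]

noncomputable local instance bigInst : (Lbig L').Structure (M ⊕ Σ n, L.Relations n) := bigStr L'

abbrev Psym (L : Language) (L' : Language) : (Lbig L').Relations 1 := Sum.inr (Sum.inl ⟨rfl⟩)
abbrev Rsym (L : Language) (L' : Language) (k : ℕ) : (Lbig L').Relations (k+1) :=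
  Sum.inr (Sum.inr ⟨k, rfl⟩)
abbrev rsym {n : ℕ} (r : L'.Relations n) : (Lbig L').Relations n := Sum.inl r

lemma relMap_P (x : Fin 1 → M ⊕ Σ n, L.Relations n) :
    RelMap (Psym L L') x ↔ ∀ i, (x i).isRight := Iff.rfl

lemma relMap_rsym {n : ℕ} (r : L'.Relations n) (x : Fin n → M ⊕ Σ n, L.Relations n) :
    RelMap (rsym r) x ↔ ∃ y, x = Sum.inr ∘ y ∧ RelMap r y := Iff.rfl

lemma relMap_Rsym (k : ℕ) (x : Fin (k+1) → M ⊕ Σ n, L.Relations n) :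
    RelMap (Rsym L L' k) x ↔ ∃ (m : Fin k → M) (R : L.Relations k),
      x = Fin.snoc (Sum.inl ∘ m) (Sum.inr ⟨k, R⟩) ∧ RelMap R m := Iff.rfl

lemma relMap_inr {n : ℕ} (r : L'.Relations n) (y : Fin n → Σ n, L.Relations n) :
    RelMap (L := Lbig L') (rsym r) (Sum.inr ∘ y : Fin n → M ⊕ Σ n, L.Relations n) ↔
      RelMap r y := by
  rw [relMap_rsym]
  constructor
  · rintro ⟨y', heq, hrel⟩
    obtain rfl : y = y' := funext fun i => Sum.inr_injective (congrFun heq i)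
    exact hrel
  · intro h; exact ⟨y, rfl, h⟩

lemma relMap_snoc (k : ℕ) (m : Fin k → M) (R : L.Relations k) :
    RelMap (L := Lbig L') (Rsym L L' k)
      (Fin.snoc (Sum.inl ∘ m) (Sum.inr ⟨k, R⟩) : Fin (k+1) → M ⊕ Σ n, L.Relations n) ↔
      RelMap R m := by
  rw [relMap_Rsym]
  constructor
  · rintro ⟨m', R', heq, hrel⟩
    have hm : m = m' := funext fun i =>
      Sum.inl_injective (β := (n : ℕ) × L.Relations n) (by
        simpa [Fin.snoc_castSucc] using congrFun heq i.castSucc)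
    have hR : (⟨k, R⟩ : Σ n, L.Relations n) = ⟨k, R'⟩ := Sum.inr_injective (α := M) (by
      simpa [Fin.snoc_last] using congrFun heq (Fin.last k))
    have hR2 : R = R' := by
      injection hR
    subst hm; subst hR2; exact hrel
  · intro h; exact ⟨m, R, rfl, h⟩

lemma map_comp_snoc (g : M → M) {k : ℕ} (m : Fin k → M) (s : Σ n, L.Relations n) :
    Sum.map g id ∘ (Fin.snoc (Sum.inl ∘ m) (Sum.inr s) : Fin (k+1) → M ⊕ Σ n, L.Relations n) =
      Fin.snoc (Sum.inl ∘ (g ∘ m)) (Sum.inr s) := by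
  rw [Fin.comp_snoc]
  congr 1

/-- Lift an automorphism of `M` to an automorphism of the big structure. -/
noncomputable def liftEquiv (σ : M ≃[L] M) :
    (M ⊕ Σ n, L.Relations n) ≃[Lbig L'] (M ⊕ Σ n, L.Relations n) where
  toEquiv := Equiv.sumCongr σ.toEquiv (Equiv.refl _)
  map_fun' := by
    intro n f x
    have hco : ⇑(Equiv.sumCongr σ.toEquiv (Equiv.refl (Σ n, L.Relations n))) =
        Sum.map (⇑σ) id := funext fun v => by cases v <;> rfl
    show (Equiv.sumCongr σ.toEquiv (Equiv.refl _)) (extendFun (funMap (L := L') f) x) =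
      extendFun (funMap (L := L') f) (⇑(Equiv.sumCongr σ.toEquiv (Equiv.refl _)) ∘ x)
    rw [hco]
    exact (extendFun_map _ _ _).symm
  map_rel' := by
    intro n r x
    have hco : ⇑(Equiv.sumCongr σ.toEquiv (Equiv.refl (Σ n, L.Relations n))) =
        Sum.map (⇑σ) id := funext fun v => by cases v <;> rfl
    have hcancel : ∀ v : M ⊕ Σ n, L.Relations n, Sum.map (⇑σ.symm) id (Sum.map (⇑σ) id v) = v :=
      fun v => by cases v <;> simp
    rcases r with r | (p | ⟨k, rfl⟩)
    · show (∃ y, ⇑(Equiv.sumCongr σ.toEquiv (Equiv.refl _)) ∘ x = Sum.inr ∘ y ∧ RelMap r y) ↔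
        (∃ y, x = Sum.inr ∘ y ∧ RelMap r y)
      rw [hco]
      constructor
      · rintro ⟨y, heq, hrel⟩
        refine ⟨y, funext fun i => ?_, hrel⟩
        have hi := congrFun heq i
        rw [Function.comp_apply] at hi
        cases hx : x i with
        | inl m => rw [hx] at hi; simp at hi
        | inr s => rw [hx] at hi; simpa using hi
      · rintro ⟨y, rfl, hrel⟩
        exact ⟨y, funext fun i => by simp, hrel⟩
    · show (∀ i, ((⇑(Equiv.sumCongr σ.toEquiv (Equiv.refl _)) ∘ x) i).isRight) ↔
        ∀ i, (x i).isRight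
      rw [hco]
      exact forall_congr' fun i => by cases hx : x i <;> simp [hx]
    · rw [relMap_Rsym, relMap_Rsym]
      have hco' : ⇑(Equiv.sumCongr σ.toEquiv (Equiv.refl (Σ n, L.Relations n))) ∘ x =
          Sum.map (⇑σ) id ∘ x := by rw [hco]
      simp only [Equiv.toFun_as_coe]
      rw [hco']
      constructor
      · rintro ⟨m, R, heq, hrel⟩
        refine ⟨⇑σ.symm ∘ m, R, ?_, ?_⟩
        · have h2 : Sum.map (⇑σ.symm) id ∘ (Sum.map (⇑σ) id ∘ x) =
              Sum.map (⇑σ.symm) id ∘ (Fin.snoc (Sum.inl ∘ m) (Sum.inr ⟨k, R⟩)) := by rw [heq]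
          rw [map_comp_snoc] at h2
          rw [← h2]
          funext i
          exact (hcancel (x i)).symm
        · have := σ.map_rel R (⇑σ.symm ∘ m)
          rw [show ⇑σ ∘ (⇑σ.symm ∘ m) = m from funext fun i => by simp] at this
          exact this.mp hrel
      · rintro ⟨m, R, rfl, hrel⟩
        exact ⟨⇑σ ∘ m, R, map_comp_snoc _ _ _, (σ.map_rel R m).mpr hrel⟩

lemma isRight_iff' (Φ : (M ⊕ Σ n, L.Relations n) ≃[Lbig L'] (M ⊕ Σ n, L.Relations n))
    (v : M ⊕ Σ n, L.Relations n) : (Φ v).isRight ↔ v.isRight := by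
  have h := Φ.map_rel (Psym L L') (fun _ => v)
  rw [relMap_P, relMap_P] at h
  exact ⟨fun hv => h.mp (fun _ => hv) 0, fun hv => h.mpr (fun _ => hv) 0⟩

lemma exists_inl (Φ : (M ⊕ Σ n, L.Relations n) ≃[Lbig L'] (M ⊕ Σ n, L.Relations n)) (m : M) :
    ∃ m', Φ (Sum.inl m) = Sum.inl m' := by
  have h := isRight_iff' Φ (Sum.inl m)
  cases hx : Φ (Sum.inl m) with
  | inl m' => exact ⟨m', rfl⟩
  | inr s => rw [hx] at h; simp at h

lemma exists_inr (Φ : (M ⊕ Σ n, L.Relations n) ≃[Lbig L'] (M ⊕ Σ n, L.Relations n))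
    (s : Σ n, L.Relations n) : ∃ t, Φ (Sum.inr s) = Sum.inr t := by
  have h := isRight_iff' Φ (Sum.inr s)
  cases hx : Φ (Sum.inr s) with
  | inl m' => rw [hx] at h; simp at h
  | inr t => exact ⟨t, rfl⟩

end Stmt6Aux2

namespace Stmt6Aux3
open FirstOrder.Language FirstOrder.Language.Structure Stmt6Aux

instance (L' : FirstOrder.Language) [Countable L'.Symbols] (n : ℕ) :
    Countable ((Lbig L').Functions n) := by
  haveI : Countable ((l : ℕ) × L'.Functions l) := Language.Countable.countable_functions
  exact (sigma_mk_injective (i := n)).countable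

instance (L' : FirstOrder.Language) [Countable L'.Symbols] (n : ℕ) :
    Countable ((Lbig L').Relations n) := by
  haveI : Countable ((l : ℕ) × L'.Relations l) :=
    (Sum.inr_injective (α := (l : ℕ) × L'.Functions l)).countable
  haveI : Countable (L'.Relations n) := sigma_mk_injective.countable
  exact inferInstanceAs (Countable (L'.Relations n ⊕ (PLift (n = 1) ⊕ {k : ℕ // n = k + 1})))

end Stmt6Aux3

namespace Stmt6Shrink
open FirstOrder.Language FirstOrder.Language.Structure

noncomputable def shrinkF.{a, b, c} (K : FirstOrder.Language.{b, c}) [h : ∀ n, Countable (K.Functions n)]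
    (n : ℕ) : Type a :=
  ULift.{a} (Set.range (h n).exists_injective_nat'.choose)

noncomputable def shrinkFEquiv.{a, b, c} (K : FirstOrder.Language.{b, c})
    [h : ∀ n, Countable (K.Functions n)] (n : ℕ) : K.Functions n ≃ shrinkF.{a, b, c} K n :=
  (Equiv.ofInjective _ (h n).exists_injective_nat'.choose_spec).trans Equiv.ulift.symm

noncomputable def shrinkR.{a, b, c} (K : FirstOrder.Language.{b, c}) [h : ∀ n, Countable (K.Relations n)]
    (n : ℕ) : Type a :=
  ULift.{a} (Set.range (h n).exists_injective_nat'.choose)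

noncomputable def shrinkREquiv.{a, b, c} (K : FirstOrder.Language.{b, c})
    [h : ∀ n, Countable (K.Relations n)] (n : ℕ) : K.Relations n ≃ shrinkR.{a, b, c} K n :=
  (Equiv.ofInjective _ (h n).exists_injective_nat'.choose_spec).trans Equiv.ulift.symm

/-- A universe-adjusted copy of the countable language `K`. -/
noncomputable def shrinkLang.{a, a', b, c} (K : FirstOrder.Language.{b, c})
    [∀ n, Countable (K.Functions n)] [∀ n, Countable (K.Relations n)] : FirstOrder.Language.{a, a'} where
  Functions := shrinkF.{a, b, c} K
  Relations := shrinkR.{a', b, c} K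

instance (K : FirstOrder.Language) [∀ n, Countable (K.Functions n)] (n : ℕ) : Countable (shrinkF K n) := by
  unfold shrinkF; infer_instance

instance (K : FirstOrder.Language) [∀ n, Countable (K.Relations n)] (n : ℕ) : Countable (shrinkR K n) := by
  unfold shrinkR; infer_instance

instance shrinkLang_countable.{a, a', b, c} (K : FirstOrder.Language.{b, c}) [∀ n, Countable (K.Functions n)] [∀ n, Countable (K.Relations n)] :
    Countable (shrinkLang.{a, a'} K).Symbols := by
  haveI : ∀ n, Countable ((shrinkLang.{a, a'} K).Functions n) := fun n =>
    inferInstanceAs (Countable (shrinkF K n))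
  haveI : ∀ n, Countable ((shrinkLang.{a, a'} K).Relations n) := fun n =>
    inferInstanceAs (Countable (shrinkR K n))
  infer_instance

noncomputable def shrinkStr.{a, a', b, c, d} (K : FirstOrder.Language.{b, c})
    [∀ n, Countable (K.Functions n)] [∀ n, Countable (K.Relations n)]
    {N : Type d} [K.Structure N] : (shrinkLang.{a, a', b, c} K).Structure N where
  funMap {n} f x := funMap ((shrinkFEquiv.{a, b, c} K n).symm f) x
  RelMap {n} r x := RelMap ((shrinkREquiv.{a', b, c} K n).symm r) x

attribute [local instance] shrinkStr

lemma funMap_shrink.{a, a', b, c, d} (K : FirstOrder.Language.{b, c})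
    [∀ n, Countable (K.Functions n)] [∀ n, Countable (K.Relations n)]
    {N : Type d} [K.Structure N] {n : ℕ} (f : K.Functions n) (x : Fin n → N) :
    funMap (L := shrinkLang.{a, a', b, c} K) (shrinkFEquiv.{a, b, c} K n f) x = funMap f x :=
  congrArg (fun g => funMap (M := N) g x)
    (Equiv.symm_apply_apply (shrinkFEquiv.{a, b, c} K n) f)

lemma relMap_shrink.{a, a', b, c, d} (K : FirstOrder.Language.{b, c})
    [∀ n, Countable (K.Functions n)] [∀ n, Countable (K.Relations n)]
    {N : Type d} [K.Structure N] {n : ℕ} (r : K.Relations n) (x : Fin n → N) :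
    RelMap (L := shrinkLang.{a, a', b, c} K) (shrinkREquiv.{a', b, c} K n r) x ↔ RelMap r x :=
  iff_of_eq (congrArg (fun g => RelMap (M := N) g x)
    (Equiv.symm_apply_apply (shrinkREquiv.{a', b, c} K n) r))

/-- Automorphisms of the shrunk structure are the same as automorphisms of the original. -/
noncomputable def autEquiv.{a, a', b, c, d} (K : FirstOrder.Language.{b, c})
    [∀ n, Countable (K.Functions n)] [∀ n, Countable (K.Relations n)]
    {N : Type d} [K.Structure N] :
    (N ≃[shrinkLang.{a, a', b, c} K] N) ≃ (N ≃[K] N) where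
  toFun Φ := ⟨Φ.toEquiv, fun {n} f x => by
      have h := Φ.map_fun' (shrinkFEquiv.{a, b, c} K n f) x
      rw [funMap_shrink, funMap_shrink] at h
      exact h,
    fun {n} r x => by
      have h := Φ.map_rel' (shrinkREquiv.{a', b, c} K n r) x
      rw [relMap_shrink, relMap_shrink] at h
      exact h⟩
  invFun Ψ := ⟨Ψ.toEquiv, fun {n} f x =>
      Ψ.map_fun' ((shrinkFEquiv.{a, b, c} K n).symm f) x,
    fun {n} r x =>
      Ψ.map_rel' ((shrinkREquiv.{a', b, c} K n).symm r) x⟩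
  left_inv Φ := Language.Equiv.ext fun v => rfl
  right_inv Ψ := Language.Equiv.ext fun v => rfl

lemma autEquiv_comp.{a, a', b, c, d} (K : FirstOrder.Language.{b, c})
    [∀ n, Countable (K.Functions n)] [∀ n, Countable (K.Relations n)]
    {N : Type d} [K.Structure N] (f g : N ≃[shrinkLang.{a, a', b, c} K] N) :
    autEquiv K (f.comp g) = (autEquiv K f).comp (autEquiv K g) :=
  Language.Equiv.ext fun v => rfl

end Stmt6Shrink

attribute [local instance] Stmt6Shrink.shrinkStr

attribute [local instance] Stmt6Aux2.bigInst

open Stmt6Aux Stmt6Aux2 Stmt6Aux3 FirstOrder.Language FirstOrder.Language.Structure in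
theorem stmt6 {L : FirstOrder.Language} [L.IsRelational] (M : Type*) [L.Structure M]
    (L' : FirstOrder.Language) [Countable L'.Symbols]
    [L'.Structure (Σ n, L.Relations n)]
    (hrigid : ∀ f : (Σ n, L.Relations n) ≃[L'] (Σ n, L.Relations n),
      f = FirstOrder.Language.Equiv.refl L' _) :
    ∃ L'' : FirstOrder.Language, Countable L''.Symbols ∧
      ∃ str : L''.Structure (M ⊕ Σ n, L.Relations n),
        ∃ e : (@FirstOrder.Language.Equiv L'' (M ⊕ Σ n, L.Relations n)
                (M ⊕ Σ n, L.Relations n) str str) ≃ (M ≃[L] M),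
          ∀ f g, e (@FirstOrder.Language.Equiv.comp L''
              (M ⊕ Σ n, L.Relations n) (M ⊕ Σ n, L.Relations n)
              str str (M ⊕ Σ n, L.Relations n) str f g)
            = (e f).comp (e g) := by
  classical
  refine ⟨Stmt6Shrink.shrinkLang (Lbig L'), inferInstance,
    Stmt6Shrink.shrinkStr (Lbig L'), ?_⟩
  suffices key : ∃ e : ((M ⊕ Σ n, L.Relations n) ≃[Lbig L'] (M ⊕ Σ n, L.Relations n)) ≃
      (M ≃[L] M), ∀ f g, e (f.comp g) = (e f).comp (e g) by
    obtain ⟨ebig, hcomp⟩ := key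
    refine ⟨(Stmt6Shrink.autEquiv (Lbig L')).trans ebig, ?_⟩
    intro f g
    rw [Equiv.trans_apply, Equiv.trans_apply, Equiv.trans_apply, Stmt6Shrink.autEquiv_comp]
    exact hcomp _ _
  choose σf hσf using fun (Φ : (M ⊕ Σ n, L.Relations n) ≃[Lbig L'] (M ⊕ Σ n, L.Relations n))
    (m : M) => Stmt6Aux2.exists_inl Φ m
  choose τf hτf using fun (Φ : (M ⊕ Σ n, L.Relations n) ≃[Lbig L'] (M ⊕ Σ n, L.Relations n))
    s => Stmt6Aux2.exists_inr Φ s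
  -- the restriction to the symbol sort is the identity, by rigidity
  have hτ : ∀ Φ : (M ⊕ Σ n, L.Relations n) ≃[Lbig L'] (M ⊕ Σ n, L.Relations n),
      ∀ s, Φ (Sum.inr s) = Sum.inr s := by
    intro Φ
    have li : ∀ s, τf Φ.symm (τf Φ s) = s := by
      intro s
      apply Sum.inr_injective (α := M)
      rw [← hτf Φ.symm (τf Φ s), ← hτf Φ s]
      exact Φ.symm_apply_apply _
    have ri : ∀ s, τf Φ (τf Φ.symm s) = s := by
      intro s
      apply Sum.inr_injective (α := M)
      rw [← hτf Φ (τf Φ.symm s), ← hτf Φ.symm s]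
      exact Φ.apply_symm_apply _
    have hf : ∀ {n} (f : L'.Functions n) (y : Fin n → Σ n, L.Relations n),
        τf Φ (Structure.funMap f y) = Structure.funMap f (τf Φ ∘ y) := by
      intro n f y
      have h := Φ.map_fun (show (Lbig L').Functions n from f) (Sum.inr ∘ y)
      have h1 : Structure.funMap (M := M ⊕ Σ n, L.Relations n)
          (show (Lbig L').Functions n from f) (Sum.inr ∘ y) =
          Sum.inr (Structure.funMap f y) := Stmt6Aux.extendFun_inr _ _
      have h2 : ⇑Φ ∘ (Sum.inr ∘ y) = Sum.inr ∘ (τf Φ ∘ y) := funext fun i => hτf Φ (y i)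
      have h3 : Structure.funMap (M := M ⊕ Σ n, L.Relations n)
          (show (Lbig L').Functions n from f) (Sum.inr ∘ (τf Φ ∘ y)) =
          Sum.inr (Structure.funMap f (τf Φ ∘ y)) := Stmt6Aux.extendFun_inr _ _
      rw [h1, h2, h3, hτf Φ (Structure.funMap f y)] at h
      exact Sum.inr_injective (α := M) h
    have hr : ∀ {n} (r : L'.Relations n) (y : Fin n → Σ n, L.Relations n),
        Structure.RelMap r (τf Φ ∘ y) ↔ Structure.RelMap r y := by
      intro n r y
      have h := Φ.map_rel (rsym r) (Sum.inr ∘ y)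
      rw [show ⇑Φ ∘ (Sum.inr ∘ y) = Sum.inr ∘ (τf Φ ∘ y) from
        funext fun i => hτf Φ (y i)] at h
      rw [relMap_inr, relMap_inr] at h
      exact h
    intro s
    have hid := hrigid ⟨⟨τf Φ, τf Φ.symm, li, ri⟩, hf, hr⟩
    have h0 : τf Φ s = s := DFunLike.congr_fun hid s
    rw [hτf Φ s, h0]
  have hinv : ∀ Φ : (M ⊕ Σ n, L.Relations n) ≃[Lbig L'] (M ⊕ Σ n, L.Relations n),
      ∀ m, σf Φ.symm (σf Φ m) = m := by
    intro Φ m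
    apply Sum.inl_injective (β := Σ n, L.Relations n)
    rw [← hσf Φ.symm (σf Φ m), ← hσf Φ m]
    exact Φ.symm_apply_apply _
  have hinv' : ∀ Φ : (M ⊕ Σ n, L.Relations n) ≃[Lbig L'] (M ⊕ Σ n, L.Relations n),
      ∀ m, σf Φ (σf Φ.symm m) = m := by
    intro Φ m
    have := hinv Φ.symm m
    rwa [Language.Equiv.symm_symm] at this
  have hrel : ∀ Φ : (M ⊕ Σ n, L.Relations n) ≃[Lbig L'] (M ⊕ Σ n, L.Relations n),
      ∀ {k} (R : L.Relations k) (m : Fin k → M),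
        Structure.RelMap R (σf Φ ∘ m) ↔ Structure.RelMap R m := by
    intro Φ k R m
    have h := Φ.map_rel (Rsym L L' k) (Fin.snoc (Sum.inl ∘ m) (Sum.inr ⟨k, R⟩))
    have hsnoc : ⇑Φ ∘ (Fin.snoc (Sum.inl ∘ m) (Sum.inr ⟨k, R⟩) :
          Fin (k+1) → M ⊕ Σ n, L.Relations n) =
        Fin.snoc (Sum.inl ∘ (σf Φ ∘ m)) (Sum.inr ⟨k, R⟩) := by
      rw [Fin.comp_snoc]
      rw [show ⇑Φ ∘ (Sum.inl ∘ m) = Sum.inl ∘ (σf Φ ∘ m) from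
        funext fun i => hσf Φ (m i)]
      rw [hτ Φ ⟨k, R⟩]
    rw [hsnoc, relMap_snoc, relMap_snoc] at h
    exact h
  refine ⟨⟨fun Φ => ⟨⟨σf Φ, σf Φ.symm, hinv Φ, hinv' Φ⟩,
      fun {n} f _ => isEmptyElim f, fun {n} R x => hrel Φ R x⟩,
      fun σ => Stmt6Aux2.liftEquiv σ, ?_, ?_⟩, ?_⟩
  · intro Φ
    apply Language.Equiv.ext
    intro v
    cases v with
    | inl m => rw [hσf Φ m]; rfl
    | inr s => rw [hτ Φ s]; rfl
  · intro σ
    apply Language.Equiv.ext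
    intro m
    have h := hσf (Stmt6Aux2.liftEquiv (L' := L') σ) m
    have h2 : (Stmt6Aux2.liftEquiv (L' := L') σ) (Sum.inl m) = Sum.inl (σ m) := rfl
    exact Sum.inl_injective (h.symm.trans h2)
  · intro f g
    apply Language.Equiv.ext
    intro m
    apply Sum.inl_injective (β := Σ n, L.Relations n)
    show Sum.inl (σf (f.comp g) m) = Sum.inl (σf f (σf g m))
    rw [← hσf (f.comp g) m, ← hσf f (σf g m), ← hσf g m]
    rfl
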